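/- For integers b, v with 1 ≤ b ≤ v/2: Σ_{i=0}^{b-1} C(v-b, i) ≤ (1/2)·C(v, b). -/

import Mathlib

open scoped BigOperators

/-- For `1 ≤ b` and `2b ≤ v`: `Σ_{i=0}^{b-1} C(v-b, i) ≤ (1/2)·C(v, b)`. -/
theorem stmt_10 (v b : ℕ) (hb : 1 ≤ b) (hbv : 2 * b ≤ v) :
    2 * ∑ i ∈ Finset.range b, Nat.choose (v - b) i ≤ Nat.choose v b := by
  -- write v - b = m + 1
  obtain ⟨m, hm⟩ : ∃ m, v - b = m + 1 := ⟨v - b - 1, by omega⟩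
  -- step 1: termwise bound, sum ≤ C(v-1, b-1)
  have h1 : ∑ i ∈ Finset.range b, Nat.choose (v - b) i
      ≤ ∑ i ∈ Finset.range b, Nat.choose (i + m) m := by
    apply Finset.sum_le_sum
    intro i _
    rcases Nat.eq_zero_or_pos i with h0 | h0
    · subst h0; simp
    · rw [hm]
      calc Nat.choose (m + 1) i ≤ Nat.choose (i + m) i :=
            Nat.choose_le_choose i (by omega)
        _ = Nat.choose (i + m) m := by
            have h := (Nat.choose_symm (show i ≤ i + m by omega)).symm
            simpa using h
  have h2 : ∑ i ∈ Finset.range b, Nat.choose (i + m) m = Nat.choose (v - 1) (b - 1) := by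
    obtain ⟨n, hn⟩ : ∃ n, b = n + 1 := ⟨b - 1, by omega⟩
    rw [hn, Nat.sum_range_add_choose n m]
    have : n + m + 1 = v - 1 := by omega
    rw [this]
    have h := Nat.choose_symm (show n + 1 - 1 ≤ v - 1 by omega)
    have h6 : v - 1 - (n + 1 - 1) = m + 1 := by omega
    rw [h6] at h
    exact h
  -- step 2: 2 * C(v-1, b-1) ≤ C(v, b)
  have h3 : v * Nat.choose (v - 1) (b - 1) = Nat.choose v b * b := by
    have := Nat.add_one_mul_choose_eq (v - 1) (b - 1)
    have hv1 : v - 1 + 1 = v := by omega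
    have hb1 : b - 1 + 1 = b := by omega
    rwa [hv1, hb1] at this
  have key : 2 * Nat.choose (v - 1) (b - 1) ≤ Nat.choose v b := by
    have h4 : 2 * b * Nat.choose (v - 1) (b - 1) ≤ v * Nat.choose (v - 1) (b - 1) :=
      Nat.mul_le_mul_right _ hbv
    rw [h3] at h4
    have : 2 * Nat.choose (v - 1) (b - 1) * b ≤ Nat.choose v b * b := by
      calc 2 * Nat.choose (v - 1) (b - 1) * b = 2 * b * Nat.choose (v - 1) (b - 1) := by ring
        _ ≤ _ := h4
    exact Nat.le_of_mul_le_mul_right this (by omega)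
  calc 2 * ∑ i ∈ Finset.range b, Nat.choose (v - b) i
      ≤ 2 * Nat.choose (v - 1) (b - 1) := by
        have := h1.trans_eq h2
        omega
    _ ≤ Nat.choose v b := key
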